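/- Let H_{x1}, H_{z1} be m1×nA and m2×nA matrices and H_{x2}, H_{z2} be m3×nB and m4×nB matrices over GF(2). The solution space of the system: (I_{m1}⊗H_{x2})s = 0, (I_{m1}⊗H_{z2})s = 0, (I_{m2}⊗H_{x2})v = 0, (I_{m2}⊗H_{z2})v = 0, and (H_{z1}ᵀ⊗I_{nB})s + (H_{x1}ᵀ⊗I_{nB})v = 0, for (s,v) ∈ F_2^{m1·nB} × F_2^{m2·nB}, equals the tensor product ker([H_{z1}ᵀ, H_{x1}ᵀ]) ⊗ ker(vertcat(H_{x2}, H_{z2})) under the natural identification. In particular its dimension is dim ker([H_{z1}ᵀ, H_{x1}ᵀ]) · dim ker(vertcat(H_{x2}, H_{z2})). -/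

import Mathlib

open Matrix Kronecker

abbrev F2 := ZMod 2

def hcat {I J1 J2 : Type*} (A : Matrix I J1 F2) (B : Matrix I J2 F2) :
    Matrix I (J1 ⊕ J2) F2 := fun i => Sum.elim (A i) (B i)

def vcat {I1 I2 J : Type*} (A : Matrix I1 J F2) (B : Matrix I2 J F2) :
    Matrix (I1 ⊕ I2) J F2 := Sum.elim A B

open Module


section General

variable {K B : Type*} [Fintype K] [Fintype B]
variable {N P : Type*} [AddCommGroup N] [Module F2 N] [AddCommGroup P] [Module F2 P]

def bik (f : (K → F2) →ₗ[F2] N) (g : (B → F2) →ₗ[F2] P) : Submodule F2 (K → B → F2) where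
  carrier := {M | (∀ b, f (fun k => M k b) = 0) ∧ ∀ k, g (M k) = 0}
  add_mem' := by
    rintro M M' ⟨h1, h2⟩ ⟨h1', h2'⟩
    refine ⟨fun b => ?_, fun k => ?_⟩
    · have h : (fun k => (M + M') k b) = (fun k => M k b) + fun k => M' k b := rfl
      rw [h, map_add, h1 b, h1' b, add_zero]
    · have h : (M + M') k = M k + M' k := rfl
      rw [h, map_add, h2 k, h2' k, add_zero]
  zero_mem' := ⟨fun b => by rw [show (fun k : K => (0 : K → B → F2) k b) = 0 from rfl, map_zero], fun k => by rw [show ((0 : K → B → F2) k) = 0 from rfl, map_zero]⟩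
  smul_mem' := by
    rintro c M ⟨h1, h2⟩
    refine ⟨fun b => ?_, fun k => ?_⟩
    · have h : (fun k => (c • M) k b) = c • fun k => M k b := rfl
      rw [h, _root_.map_smul, h1 b, smul_zero]
    · have h : (c • M) k = c • M k := rfl
      rw [h, _root_.map_smul, h2 k, smul_zero]

set_option maxHeartbeats 2000000 in
theorem finrank_bik (f : (K → F2) →ₗ[F2] N) (g : (B → F2) →ₗ[F2] P) :
    finrank F2 (bik f g) =
      finrank F2 (LinearMap.ker f) * finrank F2 (LinearMap.ker g) := by
  classical
  set r := finrank F2 (LinearMap.ker f) with hr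
  set t := finrank F2 (LinearMap.ker g) with ht
  let bu : Basis (Fin r) F2 (LinearMap.ker f) := Module.finBasis F2 _
  let bw : Basis (Fin t) F2 (LinearMap.ker g) := Module.finBasis F2 _
  let u : Fin r → (K → F2) := fun i => (bu i : K → F2)
  let w : Fin t → (B → F2) := fun j => (bw j : B → F2)
  have hu : LinearIndependent F2 u :=
    bu.linearIndependent.map' (LinearMap.ker f).subtype (LinearMap.ker f).ker_subtype
  have hw : LinearIndependent F2 w :=
    bw.linearIndependent.map' (LinearMap.ker g).subtype (LinearMap.ker g).ker_subtype
  let mamb : Fin r × Fin t → (K → B → F2) := fun p k b => u p.1 k * w p.2 b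
  have hmem : ∀ p, mamb p ∈ bik f g := by
    intro p
    constructor
    · intro b
      have h : (fun k => mamb p k b) = w p.2 b • u p.1 := by
        funext k; simp [mamb, mul_comm, smul_eq_mul]
      rw [h, _root_.map_smul, LinearMap.mem_ker.mp (bu p.1).2, smul_zero]
    · intro k
      have h : mamb p k = u p.1 k • w p.2 := by
        funext b; simp [mamb, smul_eq_mul]
      rw [h, _root_.map_smul, LinearMap.mem_ker.mp (bw p.2).2, smul_zero]
  have hli : LinearIndependent F2 mamb := by
    rw [Fintype.linearIndependent_iff]
    intro d hd p
    have hcb : ∀ b i, (∑ j, d (i, j) * w j b) = 0 := by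
      intro b
      have h2 : ∑ i, (∑ j, d (i, j) * w j b) • u i = 0 := by
        funext k
        have := congrFun (congrFun hd k) b
        simp only [Finset.sum_apply, Pi.smul_apply, smul_eq_mul, Pi.zero_apply] at this ⊢
        rw [← this, Fintype.sum_prod_type]
        refine Finset.sum_congr rfl fun i _ => ?_
        rw [Finset.sum_mul]
        refine Finset.sum_congr rfl fun j _ => ?_
        simp only [mamb]
        ring
      exact Fintype.linearIndependent_iff.mp hu _ h2
    have hdj : ∀ i, ∀ j, d (i, j) = 0 := by
      intro i
      have h2 : ∑ j, d (i, j) • w j = 0 := by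
        funext b
        simpa [Finset.sum_apply, smul_eq_mul] using hcb b i
      exact Fintype.linearIndependent_iff.mp hw _ h2
    exact hdj p.1 p.2
  have hge : r * t ≤ finrank F2 (bik f g) := by
    let m : Fin r × Fin t → (bik f g) := fun p => ⟨mamb p, hmem p⟩
    have hlim : LinearIndependent F2 m := by
      apply LinearIndependent.of_comp (bik f g).subtype
      exact hli
    simpa [Fintype.card_prod] using hlim.fintype_card_le_finrank
  have hle : finrank F2 (bik f g) ≤ r * t := by
    have hspan : bik f g ≤ Submodule.span F2 (Set.range mamb) := by
      intro M hM
      obtain ⟨hcol, hrow⟩ := hM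
      let col : B → LinearMap.ker f := fun b => ⟨fun k => M k b, LinearMap.mem_ker.mpr (hcol b)⟩
      let c : Fin r → (B → F2) := fun i b => bu.repr (col b) i
      have hMc : ∀ k b, M k b = ∑ i, c i b * u i k := by
        intro k b
        have h2 : ((col b : K → F2)) k = ∑ i, bu.repr (col b) i * u i k := by
          conv_lhs => rw [← bu.sum_repr (col b)]
          simp only [u, Submodule.coe_sum, Finset.sum_apply, Submodule.coe_smul, Pi.smul_apply, smul_eq_mul]
        exact h2
      have hc : ∀ i, c i ∈ LinearMap.ker g := by
        intro i
        obtain ⟨L, hL⟩ := LinearMap.exists_extend (bu.coord i)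
        have hci : c i = fun b => L (fun k => M k b) := by
          funext b
          have h3 : L ((col b : K → F2)) = bu.repr (col b) i := by
            have h4 := congrFun (congrArg (fun (h : _ →ₗ[F2] F2) => (h : _ → F2)) hL) (col b)
            simpa using h4
          exact h3.symm
        have hexp : (fun b => L (fun k => M k b)) = ∑ k, L (Pi.single k 1) • M k := by
          funext b
          have hsingle : (fun k => M k b) = ∑ k, M k b • Pi.single k (1 : F2) := by
            funext k'
            simp [Finset.sum_apply, Pi.single_apply, smul_eq_mul]
          rw [hsingle, map_sum]
          simp only [Finset.sum_apply, _root_.map_smul, Pi.smul_apply, smul_eq_mul]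
          exact Finset.sum_congr rfl fun k _ => mul_comm _ _
        rw [hci, hexp]
        exact Submodule.sum_mem _ fun k _ =>
          Submodule.smul_mem _ _ (LinearMap.mem_ker.mpr (hrow k))
      let d : Fin r → Fin t → F2 := fun i j => bw.repr ⟨c i, hc i⟩ j
      have hcd : ∀ i b, c i b = ∑ j, d i j * w j b := by
        intro i b
        have h2 : ((⟨c i, hc i⟩ : LinearMap.ker g) : B → F2) b
            = ∑ j, bw.repr ⟨c i, hc i⟩ j * w j b := by
          conv_lhs => rw [← bw.sum_repr ⟨c i, hc i⟩]
          simp only [w, Submodule.coe_sum, Finset.sum_apply, Submodule.coe_smul, Pi.smul_apply, smul_eq_mul]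
        exact h2
      have hM : M = ∑ p : Fin r × Fin t, d p.1 p.2 • mamb p := by
        funext k b
        simp only [Finset.sum_apply, Pi.smul_apply, smul_eq_mul]
        rw [hMc k b, Fintype.sum_prod_type]
        refine Finset.sum_congr rfl fun i _ => ?_
        rw [hcd i b, Finset.sum_mul]
        refine Finset.sum_congr rfl fun j _ => ?_
        simp [mamb]
        ring
      rw [hM]
      exact Submodule.sum_mem _ fun p _ =>
        Submodule.smul_mem _ _ (Submodule.subset_span ⟨p, rfl⟩)
    calc finrank F2 (bik f g) ≤ finrank F2 (Submodule.span F2 (Set.range mamb)) :=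
          Submodule.finrank_mono hspan
      _ ≤ Fintype.card (Fin r × Fin t) := finrank_range_le_card mamb
      _ = r * t := by simp
  omega

lemma mem_bik {f : (K → F2) →ₗ[F2] N} {g : (B → F2) →ₗ[F2] P} {M : K → B → F2} :
    M ∈ bik f g ↔ (∀ b, f (fun k => M k b) = 0) ∧ ∀ k, g (M k) = 0 := Iff.rfl

end General

lemma mulVec_apply' {I J : Type*} [Fintype J] (M : Matrix I J F2) (x : J → F2) (i : I) :
    (M *ᵥ x) i = ∑ j, M i j * x j := rfl


lemma one_kron_mulVec {I J B : Type*} [Fintype I] [Fintype B] [DecidableEq I]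
    (H : Matrix J B F2) (s : I × B → F2) (i : I) (a : J) :
    (((1 : Matrix I I F2) ⊗ₖ H) *ᵥ s) (i, a) = (H *ᵥ fun b => s (i, b)) a := by
  simp [Matrix.mulVec, dotProduct, Fintype.sum_prod_type,
    Matrix.kroneckerMap_apply, Matrix.one_apply, ite_mul, zero_mul, Finset.sum_ite_eq]

lemma kron_one_mulVec {I J B : Type*} [Fintype I] [Fintype B] [DecidableEq B]
    (M : Matrix J I F2) (s : I × B → F2) (a : J) (b : B) :
    ((M ⊗ₖ (1 : Matrix B B F2)) *ᵥ s) (a, b) = ∑ i, M a i * s (i, b) := by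
  simp [Matrix.mulVec, dotProduct, Fintype.sum_prod_type, Matrix.kroneckerMap_apply,
    Matrix.one_apply, mul_ite, ite_mul, mul_zero, zero_mul, Finset.sum_ite_eq]

lemma hcat_mulVec {I J1 J2 : Type*} [Fintype J1] [Fintype J2] (A : Matrix I J1 F2)
    (Bm : Matrix I J2 F2) (x : J1 ⊕ J2 → F2) (i : I) :
    (hcat A Bm *ᵥ x) i =
      (A *ᵥ fun j => x (Sum.inl j)) i + (Bm *ᵥ fun j => x (Sum.inr j)) i := by
  simp [hcat, Matrix.mulVec, dotProduct, Fintype.sum_sum_type]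

lemma vcat_mulVec_inl {I1 I2 J : Type*} [Fintype J] (A : Matrix I1 J F2)
    (B : Matrix I2 J F2) (x : J → F2) (i : I1) :
    (vcat A B *ᵥ x) (Sum.inl i) = (A *ᵥ x) i := rfl

lemma vcat_mulVec_inr {I1 I2 J : Type*} [Fintype J] (A : Matrix I1 J F2)
    (B : Matrix I2 J F2) (x : J → F2) (i : I2) :
    (vcat A B *ᵥ x) (Sum.inr i) = (B *ᵥ x) i := rfl

def pairEquiv {I1 I2 B : Type*} :
    ((I1 × B → F2) × (I2 × B → F2)) ≃ₗ[F2] ((I1 ⊕ I2) → B → F2) where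
  toFun x := Sum.elim (fun i b => x.1 (i, b)) (fun j b => x.2 (j, b))
  invFun w := (fun p => w (Sum.inl p.1) p.2, fun p => w (Sum.inr p.1) p.2)
  map_add' x y := by funext k b; cases k <;> rfl
  map_smul' c x := by funext k b; cases k <;> rfl
  left_inv x := rfl
  right_inv w := by funext k b; cases k <;> rfl

/-- The `S`/`V` dependency system of the 4D XYZ product (Eq. (19) of the paper):
the space of pairs `(s, v)` with
`(I_{m1}⊗H_{x2}) s = (I_{m1}⊗H_{z2}) s = 0`,
`(I_{m2}⊗H_{x2}) v = (I_{m2}⊗H_{z2}) v = 0`, and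
`(H_{x1}ᵀ⊗I_{nB}) s + (H_{z1}ᵀ⊗I_{nB}) v = 0`
has dimension `dim ker([H_{x1}ᵀ, H_{z1}ᵀ]) · dim ker(vertcat(H_{x2}, H_{z2}))`,
i.e. it is (isomorphic to) the tensor product of the two kernels. -/
theorem sv_solution_space_dim {m1 m2 m3 m4 nA nB : ℕ}
    (Hx1 : Matrix (Fin m1) (Fin nA) F2) (Hz1 : Matrix (Fin m2) (Fin nA) F2)
    (Hx2 : Matrix (Fin m3) (Fin nB) F2) (Hz2 : Matrix (Fin m4) (Fin nB) F2) :
    Module.finrank F2 (LinearMap.ker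
      (LinearMap.prod
        (LinearMap.prod
          (LinearMap.prod
            ((((1 : Matrix (Fin m1) (Fin m1) F2) ⊗ₖ Hx2).mulVecLin).comp
              (LinearMap.fst F2 (Fin m1 × Fin nB → F2) (Fin m2 × Fin nB → F2)))
            ((((1 : Matrix (Fin m1) (Fin m1) F2) ⊗ₖ Hz2).mulVecLin).comp
              (LinearMap.fst F2 (Fin m1 × Fin nB → F2) (Fin m2 × Fin nB → F2))))
          (LinearMap.prod
            ((((1 : Matrix (Fin m2) (Fin m2) F2) ⊗ₖ Hx2).mulVecLin).comp
              (LinearMap.snd F2 (Fin m1 × Fin nB → F2) (Fin m2 × Fin nB → F2)))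
            ((((1 : Matrix (Fin m2) (Fin m2) F2) ⊗ₖ Hz2).mulVecLin).comp
              (LinearMap.snd F2 (Fin m1 × Fin nB → F2) (Fin m2 × Fin nB → F2)))))
        (((Hx1ᵀ ⊗ₖ (1 : Matrix (Fin nB) (Fin nB) F2)).mulVecLin).comp
            (LinearMap.fst F2 (Fin m1 × Fin nB → F2) (Fin m2 × Fin nB → F2)) +
         ((Hz1ᵀ ⊗ₖ (1 : Matrix (Fin nB) (Fin nB) F2)).mulVecLin).comp
            (LinearMap.snd F2 (Fin m1 × Fin nB → F2) (Fin m2 × Fin nB → F2))))) =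
    Module.finrank F2 (LinearMap.ker (hcat Hx1ᵀ Hz1ᵀ).mulVecLin) *
    Module.finrank F2 (LinearMap.ker (vcat Hx2 Hz2).mulVecLin) := by
  classical
  have key : Submodule.map
      ((pairEquiv : ((Fin m1 × Fin nB → F2) × (Fin m2 × Fin nB → F2)) ≃ₗ[F2]
        ((Fin m1 ⊕ Fin m2) → Fin nB → F2)) :
        ((Fin m1 × Fin nB → F2) × (Fin m2 × Fin nB → F2)) →ₗ[F2] _)
      (LinearMap.ker
      (LinearMap.prod
        (LinearMap.prod
          (LinearMap.prod
            ((((1 : Matrix (Fin m1) (Fin m1) F2) ⊗ₖ Hx2).mulVecLin).comp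
              (LinearMap.fst F2 (Fin m1 × Fin nB → F2) (Fin m2 × Fin nB → F2)))
            ((((1 : Matrix (Fin m1) (Fin m1) F2) ⊗ₖ Hz2).mulVecLin).comp
              (LinearMap.fst F2 (Fin m1 × Fin nB → F2) (Fin m2 × Fin nB → F2))))
          (LinearMap.prod
            ((((1 : Matrix (Fin m2) (Fin m2) F2) ⊗ₖ Hx2).mulVecLin).comp
              (LinearMap.snd F2 (Fin m1 × Fin nB → F2) (Fin m2 × Fin nB → F2)))
            ((((1 : Matrix (Fin m2) (Fin m2) F2) ⊗ₖ Hz2).mulVecLin).comp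
              (LinearMap.snd F2 (Fin m1 × Fin nB → F2) (Fin m2 × Fin nB → F2)))))
        (((Hx1ᵀ ⊗ₖ (1 : Matrix (Fin nB) (Fin nB) F2)).mulVecLin).comp
            (LinearMap.fst F2 (Fin m1 × Fin nB → F2) (Fin m2 × Fin nB → F2)) +
         ((Hz1ᵀ ⊗ₖ (1 : Matrix (Fin nB) (Fin nB) F2)).mulVecLin).comp
            (LinearMap.snd F2 (Fin m1 × Fin nB → F2) (Fin m2 × Fin nB → F2))))) =
      bik (hcat Hx1ᵀ Hz1ᵀ).mulVecLin (vcat Hx2 Hz2).mulVecLin := by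
    ext w
    rw [Submodule.mem_map_equiv, LinearMap.mem_ker, mem_bik]
    simp only [LinearMap.prod_apply, LinearMap.comp_apply, LinearMap.add_apply,
      LinearMap.fst_apply, LinearMap.snd_apply, Matrix.mulVecLin_apply, Function.prod,
      Prod.mk_eq_zero]
    constructor
    · rintro ⟨⟨⟨h1, h2⟩, h3, h4⟩, h5⟩
      constructor
      · intro b
        funext a
        have h := congrFun h5 (a, b)
        rw [Pi.add_apply, kron_one_mulVec, kron_one_mulVec, Pi.zero_apply] at h
        rw [hcat_mulVec, mulVec_apply', mulVec_apply', Pi.zero_apply]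
        exact h
      · intro k
        funext c
        cases k with
        | inl i =>
          cases c with
          | inl c3 =>
            rw [vcat_mulVec_inl, Pi.zero_apply]
            have h := congrFun h1 (i, c3)
            rw [one_kron_mulVec, Pi.zero_apply] at h
            exact h
          | inr c4 =>
            rw [vcat_mulVec_inr, Pi.zero_apply]
            have h := congrFun h2 (i, c4)
            rw [one_kron_mulVec, Pi.zero_apply] at h
            exact h
        | inr j =>
          cases c with
          | inl c3 =>
            rw [vcat_mulVec_inl, Pi.zero_apply]
            have h := congrFun h3 (j, c3)
            rw [one_kron_mulVec, Pi.zero_apply] at h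
            exact h
          | inr c4 =>
            rw [vcat_mulVec_inr, Pi.zero_apply]
            have h := congrFun h4 (j, c4)
            rw [one_kron_mulVec, Pi.zero_apply] at h
            exact h
    · rintro ⟨hcol, hrow⟩
      refine ⟨⟨⟨?_, ?_⟩, ?_, ?_⟩, ?_⟩
      · funext p
        obtain ⟨i, a⟩ := p
        rw [one_kron_mulVec, Pi.zero_apply]
        have h := congrFun (hrow (Sum.inl i)) (Sum.inl a)
        rw [vcat_mulVec_inl, Pi.zero_apply] at h
        exact h
      · funext p
        obtain ⟨i, a⟩ := p
        rw [one_kron_mulVec, Pi.zero_apply]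
        have h := congrFun (hrow (Sum.inl i)) (Sum.inr a)
        rw [vcat_mulVec_inr, Pi.zero_apply] at h
        exact h
      · funext p
        obtain ⟨j, a⟩ := p
        rw [one_kron_mulVec, Pi.zero_apply]
        have h := congrFun (hrow (Sum.inr j)) (Sum.inl a)
        rw [vcat_mulVec_inl, Pi.zero_apply] at h
        exact h
      · funext p
        obtain ⟨j, a⟩ := p
        rw [one_kron_mulVec, Pi.zero_apply]
        have h := congrFun (hrow (Sum.inr j)) (Sum.inr a)
        rw [vcat_mulVec_inr, Pi.zero_apply] at h
        exact h
      · funext p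
        obtain ⟨a, b⟩ := p
        rw [Pi.add_apply, kron_one_mulVec, kron_one_mulVec, Pi.zero_apply]
        have h := congrFun (hcol b) a
        rw [hcat_mulVec, mulVec_apply', mulVec_apply', Pi.zero_apply] at h
        exact h
  rw [← LinearEquiv.finrank_map_eq
    (pairEquiv : ((Fin m1 × Fin nB → F2) × (Fin m2 × Fin nB → F2)) ≃ₗ[F2]
      ((Fin m1 ⊕ Fin m2) → Fin nB → F2)) _, key, finrank_bik]
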